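/- Let m be a positive integer, f ∈ ℝᵐ with f(j) ≥ 0 for all j, and C ∈ ℝ. Then there exists M ∈ ℝ such that for every h ∈ ℝᵐ with h(j) ≥ 0 for all j and (1/2)·Σ_{j<m} ( h(j) − f(j)·log h(j) ) ≤ C, one has h(j) ≤ M for all j. -/

import Mathlib

private lemma klA (a x : ℝ) (ha : 0 ≤ a) (hx : 0 ≤ x) :
    x / 2 - max 0 (a * Real.log (2 * a)) ≤ x - a * Real.log x := by
  rcases eq_or_lt_of_le hx with hx0 | hx0
  · simp [← hx0, Real.log_zero]
  rcases eq_or_lt_of_le ha with ha0 | ha0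
  · simp [← ha0]
    linarith
  · have h1 : Real.log (x / (2 * a)) ≤ x / (2 * a) - 1 :=
      Real.log_le_sub_one_of_pos (by positivity)
    rw [Real.log_div (ne_of_gt hx0) (by positivity)] at h1
    have h2 : a * Real.log x ≤ x / 2 - a + a * Real.log (2 * a) := by
      have := mul_le_mul_of_nonneg_left h1 ha
      have hxa : a * (x / (2 * a) - 1) = x / 2 - a := by
        field_simp
      nlinarith
    have h3 : a * Real.log (2 * a) ≤ max 0 (a * Real.log (2 * a)) := le_max_right _ _
    linarith

private lemma klB (a x : ℝ) (ha : 0 ≤ a) (hx : 0 ≤ x) :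
    min 0 (a - a * Real.log a) ≤ x - a * Real.log x := by
  have hmin : min 0 (a - a * Real.log a) ≤ 0 := min_le_left _ _
  rcases eq_or_lt_of_le hx with hx0 | hx0
  · simp [← hx0, Real.log_zero]
  rcases eq_or_lt_of_le ha with ha0 | ha0
  · simp [← ha0]; linarith
  · have h1 : Real.log (x / a) ≤ x / a - 1 :=
      Real.log_le_sub_one_of_pos (by positivity)
    rw [Real.log_div (ne_of_gt hx0) (ne_of_gt ha0)] at h1
    have h2 : a * (Real.log x - Real.log a) ≤ a * (x / a - 1) :=
      mul_le_mul_of_nonneg_left h1 ha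
    have hxa : a * (x / a - 1) = x - a := by field_simp
    have h3 : min 0 (a - a * Real.log a) ≤ a - a * Real.log a := min_le_right _ _
    nlinarith

/-- The sublevel sets of the Kullback–Leibler data-fitting term
`B(h, f) = (1/2) Σ_j (h j − f j · log (h j))` on the nonnegative orthant are bounded. -/
theorem kl_sublevel_sets_bounded {m : ℕ} (hm : 0 < m) (f : Fin m → ℝ)
    (hf : ∀ j, 0 ≤ f j) (C : ℝ) :
    ∃ M : ℝ, ∀ h : Fin m → ℝ, (∀ j, 0 ≤ h j) →
      (1 / 2) * (∑ j, (h j - f j * Real.log (h j))) ≤ C → ∀ j, h j ≤ M := by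
  set K : Fin m → ℝ := fun j => max 0 (f j * Real.log (2 * f j)) with hK
  set L : Fin m → ℝ := fun j => min 0 (f j - f j * Real.log (f j)) with hL
  refine ⟨4 * C + 2 * ∑ j, K j - 2 * ∑ j, L j, fun h hh hsum j => ?_⟩
  have h2C : ∑ i, (h i - f i * Real.log (h i)) ≤ 2 * C := by linarith
  have hstep : h j / 2 - K j + ∑ i ∈ Finset.univ.erase j, L i ≤
      ∑ i, (h i - f i * Real.log (h i)) := by
    rw [← Finset.add_sum_erase _ _ (Finset.mem_univ j)]
    exact add_le_add (klA (f j) (h j) (hf j) (hh j))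
      (Finset.sum_le_sum fun i _ => klB (f i) (h i) (hf i) (hh i))
  have herase : ∑ i ∈ Finset.univ.erase j, L i = (∑ i, L i) - L j :=
    Finset.sum_erase_eq_sub (Finset.mem_univ j)
  have hLj : L j ≤ 0 := min_le_left _ _
  have hKj : K j ≤ ∑ i, K i :=
    Finset.single_le_sum (f := K) (fun i _ => le_max_left _ _) (Finset.mem_univ j)
  rw [herase] at hstep
  linarith
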